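/- Let B : Ω[A⁄R] × Ω[A⁄R] → Ω[A⁄R] be an R-bilinear map satisfying B(a • D u, b • D v) = a{u, b} • D v + b{a, v} • D u + (ab) • D{u, v} for all a, b, u, v ∈ A, and let π♯ : Ω[A⁄R] → Der_R(A) be the unique A-linear map with π♯(D u) = {u, ·}. Then π♯ is a morphism of Lie algebras: π♯(B(α, β)) = ⁅π♯ α, π♯ β⁆ (commutator of derivations) for all α, β ∈ Ω[A⁄R]. -/

import Mathlib

/-- For `B` the Koszul bracket on Kähler differentials and `π♯` the
unique `A`-linear map with `π♯(D u) = {u, ·}`, the map `π♯` is a morphism of Lie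
algebras: `π♯(B(α, β)) = ⁅π♯ α, π♯ β⁆`. -/
theorem anchor_is_lie_morphism
    (R A : Type*) [CommRing R] [CommRing A] [Algebra R A]
    (P : A → A → A)
    (hP_add_left : ∀ u v w : A, P (u + v) w = P u w + P v w)
    (hP_smul_left : ∀ (r : R) (u v : A), P (r • u) v = r • P u v)
    (hP_add_right : ∀ u v w : A, P u (v + w) = P u v + P u w)
    (hP_smul_right : ∀ (r : R) (u v : A), P u (r • v) = r • P u v)
    (hP_antisymm : ∀ u v : A, P u v = - P v u)
    (hP_jacobi : ∀ u v w : A, P u (P v w) + P v (P w u) + P w (P u v) = 0)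
    (hP_leibniz : ∀ u a b : A, P u (a * b) = P u a * b + a * P u b)
    (B : KaehlerDifferential R A →ₗ[R] KaehlerDifferential R A →ₗ[R] KaehlerDifferential R A)
    (hB : ∀ a b u v : A,
      B (a • KaehlerDifferential.D R A u) (b • KaehlerDifferential.D R A v) =
        (a * P u b) • KaehlerDifferential.D R A v +
        (b * P a v) • KaehlerDifferential.D R A u +
        (a * b) • KaehlerDifferential.D R A (P u v))
    (sharp : KaehlerDifferential R A →ₗ[A] Derivation R A A)
    (hsharp : ∀ u v : A, sharp (KaehlerDifferential.D R A u) v = P u v) :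
    ∀ α β : KaehlerDifferential R A, sharp (B α β) = ⁅sharp α, sharp β⁆ := by
  classical
  -- zero and neg lemmas for P
  have h0r : ∀ u : A, P u 0 = 0 := by
    intro u
    have h := hP_add_right u 0 0
    simp only [add_zero] at h
    linear_combination -h
  have hnegr : ∀ u v : A, P u (-v) = - P u v := by
    intro u v
    have h := hP_add_right u v (-v)
    rw [add_neg_cancel, h0r] at h
    linear_combination -h
  -- rewritten Jacobi
  have hJ : ∀ u v x : A, P u (P v x) - P v (P u x) - P (P u v) x = 0 := by
    intro u v x
    have hj := hP_jacobi u v x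
    rw [hP_antisymm x u, hnegr, hP_antisymm x (P u v)] at hj
    linear_combination hj
  -- the set of generators
  set D := KaehlerDifferential.D R A with hD
  set S : Set (KaehlerDifferential R A) := {x | ∃ a u : A, x = a • D u} with hS
  have hclosed : ∀ (a : A) (x : KaehlerDifferential R A),
      x ∈ Submodule.span R S → a • x ∈ Submodule.span R S := by
    intro a x hx
    induction hx using Submodule.span_induction with
    | mem y hy =>
      obtain ⟨b, u, rfl⟩ := hy
      exact Submodule.subset_span ⟨a * b, u, (mul_smul a b (D u)).symm⟩
    | zero => simp only [smul_zero]; exact Submodule.zero_mem _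
    | add y z _ _ hy hz => rw [smul_add]; exact Submodule.add_mem _ hy hz
    | smul r y _ hy => rw [smul_comm]; exact Submodule.smul_mem _ r hy
  have hmem : ∀ ω : KaehlerDifferential R A, ω ∈ Submodule.span R S := by
    intro ω
    have htop : ω ∈ Submodule.span A (Set.range (KaehlerDifferential.D R A)) := by
      rw [KaehlerDifferential.span_range_derivation]; trivial
    induction htop using Submodule.span_induction with
    | mem y hy =>
      obtain ⟨u, rfl⟩ := hy
      exact Submodule.subset_span ⟨1, u, (one_smul A (D u)).symm⟩
    | zero => exact Submodule.zero_mem _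
    | add y z _ _ hy hz => exact Submodule.add_mem _ hy hz
    | smul a y _ hy => exact hclosed a y hy
  -- key computation on generators
  have key : ∀ a u b v : A,
      sharp (B (a • D u) (b • D v)) = ⁅sharp (a • D u), sharp (b • D v)⁆ := by
    intro a u b v
    ext x
    rw [hD, hB]
    have hsharp' : ∀ u v : A, sharp (KaehlerDifferential.D R A u) v = P u v := hsharp
    simp only [map_add, map_smul, Derivation.commutator_apply, Derivation.add_apply,
      Derivation.smul_apply, hsharp, hsharp', smul_eq_mul]
    have hl1 := hP_leibniz u b (P v x)
    have hl2 := hP_leibniz v a (P u x)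
    have hj := hJ u v x
    have ha := hP_antisymm a v
    linear_combination -a * hl1 + b * hl2 - (a * b) * hj + (b * P u x) * ha
  intro α β
  induction hmem α, hmem β using Submodule.span_induction₂ with
  | mem_mem x y hx hy =>
    obtain ⟨a, u, rfl⟩ := hx
    obtain ⟨b, v, rfl⟩ := hy
    exact key a u b v
  | zero_left y _ => simp
  | zero_right x _ => simp
  | add_left x y z _ _ _ h1 h2 => simp [map_add, add_lie, h1, h2]
  | add_right x y z _ _ _ h1 h2 => simp [map_add, lie_add, h1, h2]
  | smul_left r x y _ _ h =>
    simp only [map_smul, LinearMap.smul_apply, LinearMap.map_smul_of_tower, h, smul_lie]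
  | smul_right r x y _ _ h =>
    simp only [map_smul, LinearMap.smul_apply, LinearMap.map_smul_of_tower, h]
    exact (lie_smul r _ _).symm
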